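/- There is no universal deterministic algorithm for gathering with detection that works for all gatherable configurations in all graphs when no upper bound on the graph size is known: any algorithm that gathers configuration C with detection in t rounds (after simultaneous wake-up) causes, in configuration D_{8t}, two agents to falsely declare gathering over in round t while the other agents are elsewhere. -/

import Mathlib

/-- A port-labeled graph on vertex type `V`: each node `v` has degree `deg v`, and
`next v p` gives, for a port `p < deg v`, the node reached by leaving `v` through
port `p` together with the entry port at that node (and `none` for invalid ports). -/
structure PGraph (V : Type) where
  deg : V → ℕ
  next : V → ℕ → Option (V × ℕ)

namespace PGraph

variable {V : Type}

/-- Observation along a port sequence: the list of entry ports encountered and the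
degree of the node finally reached (`none` if the port sequence is invalid).
The (infinite) view from a node is exactly the function `fun q => obs G v q`. -/
def obs (G : PGraph V) : V → List ℕ → Option (List ℕ × ℕ)
  | v, [] => some ([], G.deg v)
  | v, p :: q =>
    match G.next v p with
    | some (w, e) => (obs G w q).map fun r => (e :: r.1, r.2)
    | none => none

/-- Colored observation: additionally records the color of the reached node. -/
def cobs {C : Type} (G : PGraph V) (col : V → C) : V → List ℕ → Option (List ℕ × ℕ × C)
  | v, [] => some ([], G.deg v, col v)
  | v, p :: q =>
    match G.next v p with
    | some (w, e) => (cobs G col w q).map fun r => (e :: r.1, r.2)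
    | none => none

/-- Two nodes have equal views iff they give the same observation along every port
sequence. -/
def SameView (G : PGraph V) (v w : V) : Prop := ∀ q : List ℕ, G.obs v q = G.obs w q

/-- Equality of enhanced views (views with occupied nodes marked by `occ`). -/
def SameEView (G : PGraph V) (occ : V → Bool) (v w : V) : Prop :=
  ∀ q : List ℕ, G.cobs occ v q = G.cobs occ w q

/-- Equality of colored views, for an arbitrary coloring of the nodes. -/
def SameCView {C : Type} (G : PGraph V) (col : V → C) (v w : V) : Prop :=
  ∀ q : List ℕ, G.cobs col v q = G.cobs col w q

/-- The node reached by following a port sequence. -/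
def run (G : PGraph V) : V → List ℕ → Option V
  | v, [] => some v
  | v, p :: q =>
    match G.next v p with
    | some (w, _) => run G w q
    | none => none

def Connected (G : PGraph V) : Prop := ∀ v w : V, ∃ q : List ℕ, G.run v q = some w

/-- Well-formedness: ports `0,…,deg v - 1` are exactly the valid ports, entry ports are
valid ports of the target node, and the edge taken backwards by the entry port leads back. -/
def WellFormed (G : PGraph V) : Prop :=
  (∀ v p, (G.next v p).isSome ↔ p < G.deg v) ∧
  ∀ v p w e, G.next v p = some (w, e) → e < G.deg w ∧ G.next w e = some (v, p)

end PGraph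

/-- A deterministic algorithm for anonymous agents, with (abstract) memory type `M`.
`init d` is the memory of a freshly woken agent seeing that its node has degree `d`;
`upd m d mv S` is the new memory given the old memory `m`, the degree `d` of the current
node, the exit/entry ports `mv` of the move just performed (`none` if the agent stayed),
and the set `S` of memories of the other agents met at the current node;
`out m` is the move chosen: leave by port `p` (`some p`) or stay idle (`none`). -/
structure Algo (M : Type) where
  init : ℕ → M
  upd : M → ℕ → Option (ℕ × ℕ) → Set M → M
  out : M → Option ℕ

/-- Effect of a chosen move at node `v`: the resulting node together with the
(exit, entry) ports of the traversed edge (`none` if the agent stays put). -/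
def moveOf {V : Type} (G : PGraph V) (v : V) : Option ℕ → V × Option (ℕ × ℕ)
  | none => (v, none)
  | some p =>
    match G.next v p with
    | some (w, e) => (w, some (p, e))
    | none => (v, none)

/-- A synchronous execution, with simultaneous wake-up in round `0`, of the
deterministic algorithm `alg` by anonymous agents indexed by `A`, starting at the
distinct nodes `start a`.  `pos a t` / `mem a t` are the position / memory of agent `a`
at the end of round `t`. -/
structure Run {V A M : Type} (G : PGraph V) (start : A → V) (alg : Algo M) where
  startInj : Function.Injective start
  pos : A → ℕ → V
  mem : A → ℕ → M
  pos_zero : ∀ a, pos a 0 = start a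
  mem_zero : ∀ a, mem a 0 = alg.init (G.deg (start a))
  step_pos : ∀ a t, pos a (t + 1) = (moveOf G (pos a t) (alg.out (mem a t))).1
  step_mem : ∀ a t, mem a (t + 1) =
    alg.upd (mem a t) (G.deg (pos a (t + 1)))
      (moveOf G (pos a t) (alg.out (mem a t))).2
      { m : M | ∃ b : A, b ≠ a ∧ pos b (t + 1) = pos a (t + 1) ∧ mem b t = m }

/-- Condition G of the paper: there exist agents with different views, and each agent
has a unique enhanced view (`occ` marks the nodes occupied in the initial
configuration). -/
def CondG {V A : Type} (G : PGraph V) (start : A → V) (occ : V → Bool) : Prop :=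
  (∃ a b : A, ¬ G.SameView (start a) (start b)) ∧
    ∀ a b : A, a ≠ b → ¬ G.SameEView occ (start a) (start b)

/-- Configuration C's graph: a 4-cycle `v₀,v₁,v₂,v₃` (nodes `Sum.inl i`) with clockwise
ports 0,1 at each node (the edge `{vᵢ, vᵢ₊₁}` has port 0 at `vᵢ` and port 1 at `vᵢ₊₁`),
and pendant nodes of degree 1 (nodes `Sum.inr j`) attached to the two non-adjacent cycle
nodes `v₀` and `v₂` by port 2 at the cycle node and port 0 at the leaf. -/
def graphC : PGraph (Fin 4 ⊕ Fin 2) where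
  deg := fun x =>
    match x with
    | .inl i => if i.val % 2 = 0 then 3 else 2
    | .inr _ => 1
  next := fun x p =>
    match x with
    | .inl i =>
      if p = 0 then some (.inl (i + 1), 1)
      else if p = 1 then some (.inl (i - 1), 0)
      else if p = 2 ∧ i.val % 2 = 0 then
        some (.inr ⟨i.val / 2, by have := i.isLt; omega⟩, 0)
      else none
    | .inr j =>
      if p = 0 then some (.inl ⟨2 * j.val, by have := j.isLt; omega⟩, 2) else none

/-- In configuration C the two agents start at `v₁` (a cycle node of degree 2) and at
its clockwise neighbor `v₂` (of degree 3). -/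
def startC : Fin 2 → Fin 4 ⊕ Fin 2 := fun a => if a = 0 then .inl 1 else .inl 2

/-- The occupied nodes of configuration C. -/
def occC : Fin 4 ⊕ Fin 2 → Bool := fun x => decide (x = .inl 1 ∨ x = .inl 2)

/-- The graph of configuration `D n` (for even `n`): a cycle `v₀,…,v_{n-1}` (nodes
`Sum.inl i`) with clockwise ports 0,1, two pendant leaves attached to `v₀` (by ports 2
and 3 at `v₀`), and one pendant leaf attached to every other node of even index (by
port 2).  The leaf `Sum.inr j` for `j < n / 2` is the leaf of `v_{2j}`, and
`Sum.inr (n / 2)` is the second leaf of `v₀`. -/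
def graphD (n : ℕ) [NeZero n] : PGraph (Fin n ⊕ Fin (n / 2 + 1)) where
  deg := fun x =>
    match x with
    | .inl i => if i.val = 0 then 4 else if i.val % 2 = 0 then 3 else 2
    | .inr _ => 1
  next := fun x p =>
    match x with
    | .inl i =>
      if p = 0 then some (.inl (i + 1), 1)
      else if p = 1 then some (.inl (i - 1), 0)
      else if p = 2 ∧ i.val % 2 = 0 then
        some (.inr ⟨i.val / 2, by have := i.isLt; omega⟩, 0)
      else if p = 3 ∧ i.val = 0 then some (.inr ⟨n / 2, by omega⟩, 0)
      else none
    | .inr j =>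
      if p = 0 then
        if hj : j.val = n / 2 then
          some (.inl ⟨0, Nat.pos_of_ne_zero (NeZero.ne n)⟩, 3)
        else some (.inl ⟨2 * j.val, by have := j.isLt; omega⟩, 2)
      else none

/-- The agents of configuration `D n`: one agent on each cycle node `v_i` with
`i ≡ 0` or `i ≡ 3 (mod 4)`. -/
def AgentsD (n : ℕ) : Type := { i : Fin n // i.val % 4 = 0 ∨ i.val % 4 = 3 }

instance (n : ℕ) : Fintype (AgentsD n) := by unfold AgentsD; infer_instance

/-- Starting positions of the agents of configuration `D n`. -/
def startD (n : ℕ) : AgentsD n → Fin n ⊕ Fin (n / 2 + 1) := fun a => .inl a.val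

/-- The occupied nodes of configuration `D n`. -/
def occD (n : ℕ) : Fin n ⊕ Fin (n / 2 + 1) → Bool := fun x =>
  match x with
  | .inl i => decide (i.val % 4 = 0 ∨ i.val % 4 = 3)
  | .inr _ => false

namespace NoUniv

/-! ### The line-with-leaves cover and abstract moves on it -/

/-- Abstract position on the universal-cover-like line: integer coordinate plus a flag
telling whether we sit on the pendant leaf of that coordinate. -/
abbrev ZV := ℤ × Bool

/-- Abstract move on the cover, mimicking `moveOf` in both `graphC` and `graphD`. -/
def zmove (x : ZV) (o : Option ℕ) : ZV × Option (ℕ × ℕ) :=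
  match o with
  | none => (x, none)
  | some p =>
    if x.2 then (if p = 0 then ((x.1, false), some (0, 2)) else (x, none))
    else if p = 0 then ((x.1 + 1, false), some (0, 1))
    else if p = 1 then ((x.1 - 1, false), some (1, 0))
    else if p = 2 ∧ x.1 % 2 = 0 then ((x.1, true), some (2, 0))
    else (x, none)

def zrun (f : ℕ → Option ℕ) (z0 : ℤ) : ℕ → ZV
  | 0 => (z0, false)
  | s+1 => (zmove (zrun f z0 s) (f s)).1

/-- Well-formedness of an abstract position: on a leaf the coordinate is even. -/
def ZOK (x : ZV) : Prop := x.2 = true → x.1 % 2 = 0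

/-- Degree of the node under an abstract position. -/
def zdeg (x : ZV) : ℕ := if x.2 then 1 else if x.1 % 2 = 0 then 3 else 2

lemma zmove_ok {x : ZV} (hx : ZOK x) (o : Option ℕ) : ZOK (zmove x o).1 := by
  rcases o with _ | p
  · exact hx
  · rcases x with ⟨z, b⟩
    cases b <;> simp only [zmove, ZOK] at *
    · split_ifs with h1 h2 h3 <;> simp_all
    · split_ifs <;> simp_all

lemma zmove_drift (x : ZV) (o : Option ℕ) : |(zmove x o).1.1 - x.1| ≤ 1 := by
  rcases o with _ | p
  · simp [zmove]
  · rcases x with ⟨z, b⟩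
    cases b <;> simp only [zmove] <;> split_ifs <;> simp <;> omega

lemma zmove_add {z : ℤ} {b : Bool} {d : ℤ} (hd : d % 2 = 0) (o : Option ℕ) :
    zmove (z + d, b) o
      = (((zmove (z, b) o).1.1 + d, (zmove (z, b) o).1.2), (zmove (z, b) o).2) := by
  rcases o with _ | p
  · simp [zmove]
  · have hpar : (z + d) % 2 = z % 2 := by omega
    cases b <;> simp only [zmove, hpar] <;> split_ifs <;> simp_all <;> ring

lemma zrun_ok (f : ℕ → Option ℕ) (z0 : ℤ) (s : ℕ) : ZOK (zrun f z0 s) := by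
  induction s with
  | zero => intro h; simp [zrun] at h
  | succ s ih => exact zmove_ok ih _

lemma zrun_drift (f : ℕ → Option ℕ) (z0 : ℤ) (s : ℕ) :
    |(zrun f z0 s).1 - z0| ≤ s := by
  induction s with
  | zero => simp [zrun]
  | succ s ih =>
    have h := zmove_drift (zrun f z0 s) (f s)
    show |(zmove (zrun f z0 s) (f s)).1.1 - z0| ≤ (s : ℤ) + 1
    have := abs_sub_abs_le_abs_sub ((zmove (zrun f z0 s) (f s)).1.1 - z0) ((zrun f z0 s).1 - z0)
    have h2 : ((zmove (zrun f z0 s) (f s)).1.1 - z0) - ((zrun f z0 s).1 - z0)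
        = (zmove (zrun f z0 s) (f s)).1.1 - (zrun f z0 s).1 := by ring
    calc |(zmove (zrun f z0 s) (f s)).1.1 - z0|
        ≤ |(zrun f z0 s).1 - z0| + |(zmove (zrun f z0 s) (f s)).1.1 - (zrun f z0 s).1| := by
          have := abs_add_le ((zrun f z0 s).1 - z0) ((zmove (zrun f z0 s) (f s)).1.1 - (zrun f z0 s).1)
          calc |(zmove (zrun f z0 s) (f s)).1.1 - z0|
              = |((zrun f z0 s).1 - z0) + ((zmove (zrun f z0 s) (f s)).1.1 - (zrun f z0 s).1)| := by
                ring_nf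
            _ ≤ _ := this
      _ ≤ s + 1 := add_le_add ih h
  
lemma zrun_add (f : ℕ → Option ℕ) (z0 d : ℤ) (hd : d % 2 = 0) (s : ℕ) :
    zrun f (z0 + d) s = ((zrun f z0 s).1 + d, (zrun f z0 s).2) := by
  induction s with
  | zero => simp [zrun]
  | succ s ih =>
    show (zmove (zrun f (z0 + d) s) (f s)).1 = _
    rw [ih]
    have h := zmove_add (z := (zrun f z0 s).1) (b := (zrun f z0 s).2) (d := d) hd (f s)
    rw [Prod.mk.eta] at h
    rw [h]
    rfl

/-! ### Distance conditions -/

/-- `Near n z w s`: the residues of `z` and `w` modulo `n` are at cyclic distance at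
most `s`. -/
def Near (n : ℕ) (z w : ℤ) (s : ℕ) : Prop := ∃ m : ℤ, |z - w - m * n| ≤ s

/-- `Far n z s`: the residue of `z` modulo `n` is at cyclic distance more than `s`
from `0`. -/
def Far (n : ℕ) (z : ℤ) (s : ℕ) : Prop := ∀ m : ℤ, (s : ℤ) < |z - m * n|

lemma Near.trans {n : ℕ} {z w u : ℤ} {s s' : ℕ} (h : Near n z w s) (h' : Near n w u s') :
    Near n z u (s + s') := by
  obtain ⟨m, hm⟩ := h
  obtain ⟨m', hm'⟩ := h'
  refine ⟨m + m', ?_⟩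
  have : z - u - (m + m') * n = (z - w - m * n) + (w - u - m' * n) := by ring
  rw [this]
  calc |(z - w - m * n) + (w - u - m' * n)| ≤ |z - w - m * n| + |w - u - m' * n| := abs_add_le _ _
    _ ≤ (s : ℤ) + s' := add_le_add hm hm'
    _ = ((s + s' : ℕ) : ℤ) := by push_cast; ring

lemma Near.symm {n : ℕ} {z w : ℤ} {s : ℕ} (h : Near n z w s) : Near n w z s := by
  obtain ⟨m, hm⟩ := h
  exact ⟨-m, by rw [show w - z - -m * n = -(z - w - m * n) by ring, abs_neg]; exact hm⟩

lemma near_refl (n : ℕ) (z : ℤ) (s : ℕ) : Near n z z s :=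
  ⟨0, by simp⟩

lemma near_of_abs {n : ℕ} {z w : ℤ} {s : ℕ} (h : |z - w| ≤ s) : Near n z w s :=
  ⟨0, by simpa using h⟩

lemma Far.step {n : ℕ} {z w : ℤ} {s : ℕ} (h : Far n z (s + 1)) (hw : |w - z| ≤ 1) :
    Far n w s := by
  intro m
  have := h m
  have h2 := abs_sub_abs_le_abs_sub (z - m * n) (w - m * n)
  have h3 : |z - m * n - (w - m * n)| = |z - w| := by ring_nf
  rw [abs_sub_comm w z] at hw
  push_cast at this ⊢
  omega

lemma Far.mono {n : ℕ} {z : ℤ} {s s' : ℕ} (h : Far n z s) (hs : s' ≤ s) : Far n z s' := by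
  intro m
  have := h m
  omega

lemma Far.not_dvd {n : ℕ} {z : ℤ} {s : ℕ} (h : Far n z s) : ¬ (n : ℤ) ∣ z := by
  rintro ⟨m, rfl⟩
  have := h m
  rw [mul_comm] at this
  simp at this
  omega

lemma far_congr {n : ℕ} {z w : ℤ} (hzw : (n : ℤ) ∣ (z - w)) {s : ℕ} (h : Far n z s) :
    Far n w s := by
  obtain ⟨k, hk⟩ := hzw
  intro m
  have := h (m + k)
  have he : z - (m + k) * n = w - m * n := by rw [show z = w + n * k by omega]; ring
  rwa [he] at this

lemma far_emod {n : ℕ} {z : ℤ} (hn : 0 < n) {s : ℕ} :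
    Far n (z % n) s ↔ Far n z s := by
  have hd : (n : ℤ) ∣ (z - z % n) := Int.dvd_self_sub_of_emod_eq rfl
  constructor
  · exact far_congr (by rw [show z % (n : ℤ) - z = -(z - z % n) by ring]; exact dvd_neg.mpr hd)
  · exact far_congr hd


/-! ### Integer modular helpers -/

lemma emod_bounds (z : ℤ) {n : ℕ} (hn : 0 < n) : 0 ≤ z % n ∧ z % n < n :=
  ⟨Int.emod_nonneg z (by exact_mod_cast hn.ne'), Int.emod_lt_of_pos z (by exact_mod_cast hn)⟩

lemma emod_toNat_lt (z : ℤ) {n : ℕ} (hn : 0 < n) : (z % n).toNat < n := by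
  have := emod_bounds z hn
  omega

lemma one_emod_int {n : ℕ} (hn : 8 ≤ n) : (1 : ℤ) % n = 1 :=
  Int.emod_eq_of_lt (by norm_num) (by exact_mod_cast (by omega : 1 < n))

lemma emod_succ_eq (z : ℤ) {n : ℕ} (hn : 8 ≤ n) :
    (z + 1) % (n : ℤ) = if z % n + 1 = n then 0 else z % n + 1 := by
  have hb := emod_bounds z (by omega : 0 < n)
  rw [Int.add_emod, one_emod_int hn]
  split_ifs with h
  · rw [h, Int.emod_self]
  · exact Int.emod_eq_of_lt (by omega) (by omega)

lemma emod_pred_eq (z : ℤ) {n : ℕ} (hn : 8 ≤ n) :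
    (z - 1) % (n : ℤ) = if z % n = 0 then (n : ℤ) - 1 else z % n - 1 := by
  have hb := emod_bounds z (by omega : 0 < n)
  rw [Int.sub_emod, one_emod_int hn]
  split_ifs with h
  · rw [h]
    have h2 : (-1 + (n:ℤ) * 1) % n = -1 % n := Int.add_mul_emod_self_left (-1) (n:ℤ) 1
    have h3 : (0 : ℤ) - 1 = -1 := by ring
    rw [h3, ← h2, mul_one]
    exact Int.emod_eq_of_lt (by omega) (by omega)
  · exact Int.emod_eq_of_lt (by omega) (by omega)

lemma emod_par (z : ℤ) {n : ℕ} (hn : n % 8 = 0) : z % n % 2 = z % 2 :=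
  Int.emod_emod_of_dvd z (by exact_mod_cast (by omega : (2:ℤ) ∣ (n:ℤ)) )

lemma emod_four (z : ℤ) {n : ℕ} (hn : n % 8 = 0) : z % n % 4 = z % 4 :=
  Int.emod_emod_of_dvd z (by exact_mod_cast (by omega : (4:ℤ) ∣ (n:ℤ)) )

/-! ### Projections from the cover to `graphC` and `graphD` -/

/-- Projection of an abstract position to configuration C's graph (shifted so that
coordinate `z` projects to cycle node `(z+2) mod 4`). -/
def projC (x : ZV) : Fin 4 ⊕ Fin 2 :=
  if x.2 then
    .inr ⟨((x.1 + 2) % 4).toNat / 2, by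
      have := emod_toNat_lt (x.1 + 2) (by norm_num : 0 < 4); omega⟩
  else
    .inl ⟨((x.1 + 2) % 4).toNat, emod_toNat_lt _ (by norm_num)⟩

/-- Projection of an abstract position to the graph of configuration `D n`. -/
def projD (n : ℕ) (x : ZV) : Fin n ⊕ Fin (n / 2 + 1) :=
  if h : 0 < n then
    (if x.2 then
      .inr ⟨(x.1 % n).toNat / 2, by have := emod_toNat_lt x.1 h; omega⟩
    else
      .inl ⟨(x.1 % n).toNat, emod_toNat_lt _ h⟩)
  else .inr ⟨0, by omega⟩

/-- The cycle coordinate underlying a node of `graphD n`. -/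
def baseD (n : ℕ) : Fin n ⊕ Fin (n / 2 + 1) → ℤ
  | .inl i => i.val
  | .inr j => if j.val = n / 2 then 0 else 2 * j.val

lemma baseD_projD {n : ℕ} (hn : n % 8 = 0) (hn8 : 8 ≤ n) {x : ZV} (hx : ZOK x) :
    baseD n (projD n x) = x.1 % n := by
  rcases x with ⟨z, b⟩
  have hb := emod_bounds z (by omega : 0 < n)
  cases b
  · simp [projD, baseD, show 0 < n by omega, hb.1]
  · have hpar : z % n % 2 = 0 := by rw [emod_par z hn]; exact hx rfl
    have h2 : 2 * ((z % (n:ℤ)).toNat / 2) = (z % (n:ℤ)).toNat := by omega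
    have h3 : (z % (n:ℤ)).toNat / 2 ≠ n / 2 := by omega
    simp only [projD, baseD, show 0 < n by omega, if_pos, dif_pos]
    simp [h3]
    omega

lemma projD_congr {n : ℕ} {x y : ZV} (hf : x.2 = y.2) (hz : x.1 % n = y.1 % n) :
    projD n x = projD n y := by
  simp only [projD, hf, hz]

lemma projD_inj {n : ℕ} (hn : n % 8 = 0) (hn8 : 8 ≤ n) {x y : ZV}
    (hx : ZOK x) (hy : ZOK y) (h : projD n x = projD n y) :
    x.2 = y.2 ∧ x.1 % n = y.1 % n := by
  rcases x with ⟨z, b⟩; rcases y with ⟨w, c⟩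
  have hbz := emod_bounds z (by omega : 0 < n)
  have hbw := emod_bounds w (by omega : 0 < n)
  simp only [projD, show 0 < n by omega, dif_pos] at h
  cases b <;> cases c
  · simp only [if_neg Bool.false_ne_true, Sum.inl.injEq, Fin.mk.injEq] at h
    exact ⟨rfl, show z % (n:ℤ) = w % n by omega⟩
  · simp at h
  · simp at h
  · have hpz : z % (n:ℤ) % 2 = 0 := by rw [emod_par z hn]; exact hx rfl
    have hpw : w % (n:ℤ) % 2 = 0 := by rw [emod_par w hn]; exact hy rfl
    simp only [if_pos, Sum.inr.injEq, Fin.mk.injEq] at h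
    exact ⟨rfl, show z % (n:ℤ) = w % n by omega⟩

lemma projC_congr {x y : ZV} (hf : x.2 = y.2) (hz : x.1 % 4 = y.1 % 4) :
    projC x = projC y := by
  have : (x.1 + 2) % 4 = (y.1 + 2) % 4 := by omega
  simp only [projC, hf, this]

lemma projC_inj {x y : ZV} (hx : ZOK x) (hy : ZOK y) (h : projC x = projC y) :
    x.2 = y.2 ∧ x.1 % 4 = y.1 % 4 := by
  rcases x with ⟨z, b⟩; rcases y with ⟨w, c⟩
  have hbz := emod_bounds (z+2) (by norm_num : 0 < 4)
  have hbw := emod_bounds (w+2) (by norm_num : 0 < 4)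
  simp only [projC] at h
  cases b <;> cases c
  · simp only [if_neg Bool.false_ne_true, Sum.inl.injEq, Fin.mk.injEq] at h
    exact ⟨rfl, show z % 4 = w % 4 by omega⟩
  · simp at h
  · simp at h
  · have hpz : z % 2 = 0 := hx rfl
    have hpw : w % 2 = 0 := hy rfl
    simp only [if_pos, Sum.inr.injEq, Fin.mk.injEq] at h
    exact ⟨rfl, show z % 4 = w % 4 by omega⟩




end NoUniv
namespace NoUniv

lemma zmove_c0 (z : ℤ) : zmove (z, false) (some 0) = ((z + 1, false), some (0, 1)) := by
  simp [zmove]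

lemma zmove_c1 (z : ℤ) : zmove (z, false) (some 1) = ((z - 1, false), some (1, 0)) := by
  simp [zmove]

lemma zmove_c2e {z : ℤ} (hz : z % 2 = 0) :
    zmove (z, false) (some 2) = ((z, true), some (2, 0)) := by
  simp [zmove, hz]

lemma zmove_c2o {z : ℤ} (hz : ¬ z % 2 = 0) :
    zmove (z, false) (some 2) = ((z, false), none) := by
  simp [zmove, hz]

lemma zmove_cge {z : ℤ} {p : ℕ} (h0 : p ≠ 0) (h1 : p ≠ 1) (h2 : p ≠ 2) :
    zmove (z, false) (some p) = ((z, false), none) := by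
  simp [zmove, h0, h1, h2]

lemma zmove_l0 (z : ℤ) : zmove (z, true) (some 0) = ((z, false), some (0, 2)) := by
  simp [zmove]

lemma zmove_lge {z : ℤ} {p : ℕ} (h0 : p ≠ 0) :
    zmove (z, true) (some p) = ((z, true), none) := by
  simp [zmove, h0]

lemma moveOf_projC {x : ZV} (hx : ZOK x) (o : Option ℕ) :
    moveOf graphC (projC x) o = (projC (zmove x o).1, (zmove x o).2) := by
  rcases x with ⟨z, b⟩
  rcases o with _ | p
  · simp [moveOf, zmove]
  · cases b
    · by_cases hp0 : p = 0
      · subst hp0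
        rw [zmove_c0]
        simp only [projC, Bool.false_eq_true, if_neg, moveOf, graphC, reduceIte]
        simp only [Prod.mk.injEq, and_true, Sum.inl.injEq, Fin.ext_iff, Fin.add_def,
          Fin.val_one, Fin.val_mk]
        omega
      · by_cases hp1 : p = 1
        · subst hp1
          rw [zmove_c1]
          simp only [projC, Bool.false_eq_true, if_neg, moveOf, graphC, reduceIte]
          rw [if_neg (by norm_num : ¬ (1:ℕ) = 0)]
          simp only [Prod.mk.injEq, and_true, Sum.inl.injEq, Fin.ext_iff, Fin.sub_def,
            Fin.val_one, Fin.val_mk]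
          omega
        · by_cases hp2 : p = 2
          · subst hp2
            have hpar : ((z + 2) % 4).toNat % 2 = 0 ↔ z % 2 = 0 := by omega
            by_cases hz : z % 2 = 0
            · rw [zmove_c2e hz]
              simp only [projC, Bool.false_eq_true, if_neg, moveOf, graphC, reduceIte]
              simp [hpar.mpr hz]
            · rw [zmove_c2o hz]
              have : ¬ ((z + 2) % 4).toNat % 2 = 0 := fun h => hz (hpar.mp h)
              simp only [projC, Bool.false_eq_true, if_neg, moveOf, graphC, reduceIte,
                this]
              simp
          · rw [zmove_cge hp0 hp1 hp2]
            simp only [projC, Bool.false_eq_true, if_neg, moveOf, graphC, reduceIte,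
              hp0, hp1, hp2]
            simp [hp0, hp1, hp2]
    · have hz : z % 2 = 0 := hx rfl
      by_cases hp0 : p = 0
      · subst hp0
        rw [zmove_l0]
        simp only [projC, if_pos, moveOf, graphC, reduceIte]
        simp only [Bool.false_eq_true, if_neg, reduceIte, Prod.mk.injEq, and_true,
          Sum.inl.injEq, Fin.ext_iff, Fin.val_mk]
        omega
      · rw [zmove_lge hp0]
        simp only [projC, if_pos, moveOf, graphC, reduceIte, hp0]

end NoUniv
namespace NoUniv

lemma deg_projC {x : ZV} (hx : ZOK x) : graphC.deg (projC x) = zdeg x := by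
  rcases x with ⟨z, b⟩
  cases b
  · have hpar : ((z + 2) % 4).toNat % 2 = 0 ↔ z % 2 = 0 := by omega
    by_cases hz : z % 2 = 0
    · simp [projC, graphC, zdeg, hpar.mpr hz, hz]
    · have h2 : ¬ ((z + 2) % 4).toNat % 2 = 0 := fun h => hz (hpar.mp h)
      simp [projC, graphC, zdeg, h2, hz]
  · simp [projC, graphC, zdeg]

lemma deg_projD {n : ℕ} [NeZero n] (hn : n % 8 = 0) (hn8 : 8 ≤ n) {x : ZV} (hx : ZOK x)
    (h0 : ¬ (n : ℤ) ∣ x.1) : (graphD n).deg (projD n x) = zdeg x := by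
  rcases x with ⟨z, b⟩
  have hb := emod_bounds z (show 0 < n by omega)
  have hz0 : z % (n:ℤ) ≠ 0 := fun h => h0 (Int.dvd_of_emod_eq_zero h)
  cases b
  · have hne : ¬ (z % (n:ℤ)).toNat = 0 := by omega
    have hpar : (z % (n:ℤ)).toNat % 2 = 0 ↔ z % 2 = 0 := by
      have := emod_par z hn; omega
    by_cases hz : z % 2 = 0
    · simp [projD, graphD, zdeg, show 0 < n by omega, hpar.mpr hz, hz, hne]
    · have h2 : ¬ (z % (n:ℤ)).toNat % 2 = 0 := fun h => hz (hpar.mp h)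
      simp [projD, graphD, zdeg, show 0 < n by omega, h2, hz, hne]
  · simp [projD, graphD, zdeg, show 0 < n by omega]

lemma moveOf_projD {n : ℕ} [NeZero n] (hn : n % 8 = 0) (hn8 : 8 ≤ n) {x : ZV}
    (hx : ZOK x) (h0 : ¬ (n : ℤ) ∣ x.1) (o : Option ℕ) :
    moveOf (graphD n) (projD n x) o = (projD n (zmove x o).1, (zmove x o).2) := by
  rcases x with ⟨z, b⟩
  have hb := emod_bounds z (show 0 < n by omega)
  have hz0 : z % (n:ℤ) ≠ 0 := fun h => h0 (Int.dvd_of_emod_eq_zero h)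
  have hpos : 0 < n := by omega
  rcases o with _ | p
  · simp [moveOf, zmove]
  · cases b
    · by_cases hp0 : p = 0
      · subst hp0
        rw [zmove_c0]
        have key : ((z % (n:ℤ)).toNat + 1) % n = ((z + 1) % (n:ℤ)).toNat := by
          rw [emod_succ_eq z hn8]
          split_ifs with h
          · have h2 : (z % (n:ℤ)).toNat + 1 = n := by omega
            rw [h2, Nat.mod_self]; simp
          · rw [Nat.mod_eq_of_lt (by omega)]; omega
        simp only [projD, moveOf, graphD, reduceIte, dif_pos hpos, Bool.false_eq_true,
          if_neg, if_false]
        simp only [Prod.mk.injEq, and_true, Sum.inl.injEq, Fin.ext_iff, Fin.add_def,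
          Fin.val_one', Fin.val_mk, Nat.mod_eq_of_lt (show 1 < n by omega)]
        exact key
      · by_cases hp1 : p = 1
        · subst hp1
          rw [zmove_c1]
          have key : (n - 1 % n + (z % (n:ℤ)).toNat) % n = ((z - 1) % (n:ℤ)).toNat := by
            rw [emod_pred_eq z hn8, Nat.mod_eq_of_lt (show 1 < n by omega)]
            split_ifs with h
            · have h2 : n - 1 + (z % (n:ℤ)).toNat = n - 1 := by omega
              rw [h2, Nat.mod_eq_of_lt (by omega)]; omega
            · have h2 : n - 1 + (z % (n:ℤ)).toNat = n + ((z % (n:ℤ)).toNat - 1) := by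
                omega
              rw [h2, Nat.add_mod_left, Nat.mod_eq_of_lt (by omega)]; omega
          simp only [projD, moveOf, graphD, reduceIte, dif_pos hpos, Bool.false_eq_true,
            if_neg, if_false]
          rw [if_neg (by norm_num : ¬ (1:ℕ) = 0)]
          simp only [Prod.mk.injEq, and_true, Sum.inl.injEq, Fin.ext_iff, Fin.sub_def,
            Fin.val_one', Fin.val_mk]
          exact key
        · by_cases hp2 : p = 2
          · subst hp2
            have hpar : (z % (n:ℤ)).toNat % 2 = 0 ↔ z % 2 = 0 := by
              have := emod_par z hn; omega
            by_cases hz : z % 2 = 0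
            · rw [zmove_c2e hz]
              simp only [projD, moveOf, graphD, reduceIte, dif_pos hpos,
                Bool.false_eq_true, if_neg, if_false]
              simp [hpar.mpr hz]
            · rw [zmove_c2o hz]
              have h2 : ¬ (z % (n:ℤ)).toNat % 2 = 0 := fun h => hz (hpar.mp h)
              simp only [projD, moveOf, graphD, reduceIte, dif_pos hpos,
                Bool.false_eq_true, if_neg, if_false]
              simp [h2]
          · rw [zmove_cge hp0 hp1 hp2]
            have hne : ¬ (z % (n:ℤ)).toNat = 0 := by omega
            simp only [projD, moveOf, graphD, reduceIte, dif_pos hpos,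
              Bool.false_eq_true, if_neg, if_false, hp0, hp1, hp2]
            simp [hp0, hp1, hp2, hne]
    · have hz : z % 2 = 0 := hx rfl
      have hzn : (z % (n:ℤ)).toNat % 2 = 0 := by
        have := emod_par z hn; omega
      have hj : ¬ (z % (n:ℤ)).toNat / 2 = n / 2 := by omega
      by_cases hp0 : p = 0
      · subst hp0
        rw [zmove_l0]
        simp only [projD, moveOf, graphD, reduceIte, dif_pos hpos, dif_neg hj]
        simp only [Bool.false_eq_true, if_neg, reduceIte, Prod.mk.injEq, and_true,
          Sum.inl.injEq, Fin.ext_iff, Fin.val_mk]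
        omega
      · rw [zmove_lge hp0]
        simp only [projD, moveOf, graphD, reduceIte, dif_pos hpos, hp0]

end NoUniv
namespace NoUniv

/-- Correspondence between agents of `D n` and agents of `C`. -/
def psi {n : ℕ} (a : AgentsD n) : Fin 2 := if a.1.val % 4 = 3 then 0 else 1

/-- Canonical integer start coordinate for a C-agent. -/
def zeta (c : Fin 2) : ℤ := if c = 0 then 3 else 4

lemma zeta_mod (c : Fin 2) : zeta c % 4 = if c = 0 then 3 else 0 := by
  fin_cases c <;> simp [zeta]

lemma psi_val_mod {n : ℕ} (a : AgentsD n) :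
    ((a.1.val : ℤ)) % 4 = if psi a = 0 then 3 else 0 := by
  rcases a with ⟨i, hi⟩
  simp only [psi]
  rcases hi with h | h <;> simp [h] <;> omega

variable {M : Type} {alg : Algo M}

/-- The move sequence chosen by C-agent `c`. -/
def outsC (rC : Run graphC startC alg) (c : Fin 2) : ℕ → Option ℕ :=
  fun k => alg.out (rC.mem c k)

lemma posC_proj (rC : Run graphC startC alg) (c : Fin 2) (z0 : ℤ)
    (hz : z0 % 4 = if c = 0 then 3 else 0) (s : ℕ) :
    rC.pos c s = projC (zrun (outsC rC c) z0 s) := by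
  induction s with
  | zero =>
    rw [rC.pos_zero]
    fin_cases c <;> simp_all [startC, projC, zrun]
    · omega
    · rw [Fin.ext_iff]; simp; omega
  | succ s ih =>
    rw [rC.step_pos, ih]
    have h := moveOf_projC (zrun_ok (outsC rC c) z0 s) (outsC rC c s)
    have h1 := congrArg Prod.fst h
    simpa [outsC, zrun] using h1

lemma pairC_proj (rC : Run graphC startC alg) (c : Fin 2) (z0 : ℤ)
    (hz : z0 % 4 = if c = 0 then 3 else 0) (s : ℕ) :
    (moveOf graphC (rC.pos c s) (alg.out (rC.mem c s))).2
      = (zmove (zrun (outsC rC c) z0 s) (outsC rC c s)).2 := by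
  rw [posC_proj rC c z0 hz s]
  have h := moveOf_projC (zrun_ok (outsC rC c) z0 s) (outsC rC c s)
  have h1 := congrArg Prod.snd h
  simpa [outsC] using h1

lemma degC_proj (rC : Run graphC startC alg) (c : Fin 2) (z0 : ℤ)
    (hz : z0 % 4 = if c = 0 then 3 else 0) (s : ℕ) :
    graphC.deg (rC.pos c s) = zdeg (zrun (outsC rC c) z0 s) := by
  rw [posC_proj rC c z0 hz s]
  exact deg_projC (zrun_ok (outsC rC c) z0 s)

/-- One D-move changes the base coordinate by at most 1 (cyclically). -/
lemma baseD_moveOf {n : ℕ} [NeZero n] (hn : n % 8 = 0) (hn8 : 8 ≤ n)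
    (v : Fin n ⊕ Fin (n / 2 + 1)) (o : Option ℕ) :
    ∃ m : ℤ, |baseD n ((moveOf (graphD n) v o).1) - baseD n v - m * n| ≤ 1 := by
  have hpos : 0 < n := by omega
  rcases o with _ | p
  · exact ⟨0, by simp [moveOf]⟩
  · rcases v with i | j
    · have hlt := i.isLt
      by_cases hp0 : p = 0
      · subst hp0
        refine ⟨if i.val + 1 = n then -1 else 0, ?_⟩
        have hv : ((i + 1 : Fin n)).val = (i.val + 1) % n := by
          rw [Fin.add_def, Fin.val_one', Nat.mod_eq_of_lt (show 1 < n by omega)]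
        have h2 : (i.val + 1) % n = if i.val + 1 = n then 0 else i.val + 1 := by
          split_ifs with h
          · rw [h, Nat.mod_self]
          · exact Nat.mod_eq_of_lt (by omega)
        simp only [moveOf, graphD, reduceIte, baseD, hv, h2]
        split_ifs with h <;> (rw [abs_le]; constructor <;> push_cast <;> omega)
      · by_cases hp1 : p = 1
        · subst hp1
          refine ⟨if i.val = 0 then 1 else 0, ?_⟩
          have hv : ((i - 1 : Fin n)).val = (n - 1 + i.val) % n := by
            rw [Fin.sub_def, Fin.val_one', Nat.mod_eq_of_lt (show 1 < n by omega)]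
          have h2 : (n - 1 + i.val) % n = if i.val = 0 then n - 1 else i.val - 1 := by
            split_ifs with h
            · rw [h, Nat.add_zero, Nat.mod_eq_of_lt (by omega)]
            · rw [show n - 1 + i.val = n + (i.val - 1) by omega, Nat.add_mod_left,
                Nat.mod_eq_of_lt (by omega)]
          simp only [moveOf, graphD, reduceIte, baseD]
          rw [if_neg (by norm_num : ¬ (1:ℕ) = 0)]
          simp only [baseD, hv, h2]
          split_ifs with h <;> (rw [abs_le]; constructor <;> push_cast <;> omega)
        · by_cases hp2 : p = 2
          · subst hp2
            refine ⟨0, ?_⟩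
            by_cases he : i.val % 2 = 0
            · have hj : ¬ i.val / 2 = n / 2 := by omega
              simp [moveOf, graphD, baseD, he, hj]
              rw [abs_le]
              constructor <;> omega
            · simp [moveOf, graphD, baseD, he]
          · by_cases hp3 : p = 3
            · subst hp3
              refine ⟨0, ?_⟩
              by_cases h0 : i.val = 0
              · have h0' : i = 0 := Fin.val_eq_zero_iff.mp h0
                simp [moveOf, graphD, baseD, h0']
              · have h0' : i ≠ 0 := fun h => h0 (by simp [h])
                simp [moveOf, graphD, baseD, h0']
            · refine ⟨0, ?_⟩
              have hc : ¬ (p = 2 ∧ i.val % 2 = 0) := by tauto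
              have hc3 : ¬ (p = 3 ∧ i.val = 0) := by tauto
              simp [moveOf, graphD, baseD, hp0, hp1, hc, hc3, hp3]
    · by_cases hp0 : p = 0
      · subst hp0
        refine ⟨0, ?_⟩
        by_cases hj : j.val = n / 2
        · simp [moveOf, graphD, baseD, hj]
        · simp [moveOf, graphD, baseD, hj]
      · refine ⟨0, ?_⟩
        simp [moveOf, graphD, baseD, hp0]

end NoUniv
namespace NoUniv

lemma Far.stepN {n : ℕ} {z w : ℤ} {s : ℕ} (h : Far n z (s + 1)) (hN : Near n z w 1) :
    Far n w s := by
  obtain ⟨m, hm⟩ := hN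
  have h1 : Far n (w + m * n) s := by
    refine Far.step h ?_
    have : w + m * n - z = -(z - w - m * n) := by ring
    rw [this, abs_neg]
    exact hm
  exact far_congr (by simp) h1

variable {M : Type} {alg : Algo M}

lemma posD_near {n : ℕ} [NeZero n] (hn : n % 8 = 0) (hn8 : 8 ≤ n)
    (rD : Run (graphD n) (startD n) alg) (a : AgentsD n) (s : ℕ) :
    Near n (baseD n (rD.pos a s)) (a.1.val : ℤ) s := by
  induction s with
  | zero =>
    refine ⟨0, ?_⟩
    rw [rD.pos_zero]
    simp [startD, baseD]
  | succ s ih =>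
    have h1 : Near n (baseD n (rD.pos a (s+1))) (baseD n (rD.pos a s)) 1 := by
      rw [rD.step_pos]
      exact baseD_moveOf hn hn8 (rD.pos a s) (alg.out (rD.mem a s))
    have := h1.trans ih
    rwa [Nat.add_comm 1 s] at this

/-- The main simulation invariant: every agent of `D (8t)` whose intended or actual
position stays at cyclic distance more than `s` from node `0` behaves exactly like its
corresponding C-agent. -/
lemma main (t : ℕ) (ht : 0 < t) [NeZero (8 * t)]
    (rC : Run graphC startC alg) (rD : Run (graphD (8 * t)) (startD (8 * t)) alg) :
    ∀ (s : ℕ) (a : AgentsD (8 * t)),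
      (Far (8 * t) (zrun (outsC rC (psi a)) (a.1.val : ℤ) s).1 s ∨
        Far (8 * t) (baseD (8 * t) (rD.pos a s)) s) →
      rD.pos a s = projD (8 * t) (zrun (outsC rC (psi a)) (a.1.val : ℤ) s) ∧
        rD.mem a s = rC.mem (psi a) s := by
  have hn : (8 * t) % 8 = 0 := by omega
  have hn8 : 8 ≤ 8 * t := by omega
  have hc01 : ∀ u : Fin 2, u = 0 ∨ u = 1 := by decide
  intro s
  induction s with
  | zero =>
    intro a hfar
    have hb0 : rD.pos a 0 = Sum.inl a.1 := by rw [rD.pos_zero]; rfl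
    have hne : a.1.val ≠ 0 := by
      rcases hfar with h | h
      · have := h 0
        simp only [zrun, zero_mul, sub_zero, Nat.cast_zero] at this
        intro h0
        rw [h0] at this
        simp at this
      · have := h 0
        rw [hb0] at this
        simp only [baseD, zero_mul, sub_zero, Nat.cast_zero] at this
        intro h0
        rw [h0] at this
        simp at this
    constructor
    · rw [hb0]
      show _ = projD (8*t) ((a.1.val : ℤ), false)
      have hlt := a.1.isLt
      have hmod : ((a.1.val : ℤ) % ((8*t : ℕ) : ℤ)).toNat = a.1.val := by
        rw [Int.emod_eq_of_lt (by positivity) (by exact_mod_cast hlt)]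
        simp
      push_cast at hmod
      simp [projD, show 0 < 8*t by omega, Fin.ext_iff, hmod]
    · rw [rD.mem_zero, rC.mem_zero]
      congr 1
      rw [show startD (8*t) a = Sum.inl a.1 from rfl]
      rcases a.2 with h4 | h4
      · -- a ≡ 0 mod 4, psi a = 1, startC 1 = v₂, degree 3
        have hpsi : psi a = 1 := by simp [psi]; omega
        have he : a.1.val % 2 = 0 := by omega
        rw [hpsi]
        simp [graphD, graphC, startC, he, hne, show a.1 ≠ 0 from fun h => hne (by simp [h])]
      · -- a ≡ 3 mod 4, psi a = 0, startC 0 = v₁, degree 2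
        have hpsi : psi a = 0 := by simp [psi, h4]
        have he : ¬ a.1.val % 2 = 0 := by omega
        rw [hpsi]
        simp [graphD, graphC, startC, he, hne, show a.1 ≠ 0 from fun h => hne (by simp [h])]
  | succ s ih =>
    intro a hfar
    have hψ : ((a.1.val : ℤ)) % 4 = if psi a = 0 then 3 else 0 := psi_val_mod a
    set c := psi a with hc
    set f := outsC rC c with hf
    set x := zrun f (a.1.val : ℤ) with hx
    have hxsucc : x (s+1) = (zmove (x s) (f s)).1 := rfl
    have hdrift := zmove_drift (x s) (f s)
    -- Step A: establish the induction hypothesis for `a`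
    have hfars : Far (8 * t) (x s).1 s ∨ Far (8 * t) (baseD (8 * t) (rD.pos a s)) s := by
      rcases hfar with h | h
      · left
        refine Far.step h ?_
        rw [abs_sub_comm]
        exact hdrift
      · right
        rw [rD.step_pos] at h
        exact Far.stepN h (baseD_moveOf hn hn8 (rD.pos a s) (alg.out (rD.mem a s)))
    obtain ⟨hpos_s, hmem_s⟩ := ih a hfars
    have hfxs : Far (8 * t) (x s).1 s := by
      rcases hfars with h | h
      · exact h
      · rw [hpos_s, baseD_projD hn hn8 (zrun_ok f _ s)] at h
        exact (far_emod (by omega)).mp h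
    have hnd : ¬ ((8 * t : ℕ) : ℤ) ∣ (x s).1 := hfxs.not_dvd
    -- Step C: position at s+1
    have hout : alg.out (rD.mem a s) = f s := by rw [hmem_s]; rfl
    have hcomm := moveOf_projD hn hn8 (zrun_ok f _ s) hnd (f s)
    have hposs1 : rD.pos a (s+1) = projD (8 * t) (x (s+1)) := by
      rw [rD.step_pos, hpos_s, hout]
      exact congrArg Prod.fst hcomm
    -- Step D
    have hfx1 : Far (8 * t) (x (s+1)).1 (s+1) := by
      rcases hfar with h | h
      · exact h
      · rw [hposs1, baseD_projD hn hn8 (zrun_ok f _ (s+1))] at h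
        exact (far_emod (by omega)).mp h
    have hnd1 : ¬ ((8 * t : ℕ) : ℤ) ∣ (x (s+1)).1 := hfx1.not_dvd
    refine ⟨hposs1, ?_⟩
    -- Step E: degrees agree
    have hdeg : (graphD (8 * t)).deg (rD.pos a (s+1)) = graphC.deg (rC.pos c (s+1)) := by
      rw [hposs1, deg_projD hn hn8 (zrun_ok f _ (s+1)) hnd1,
        degC_proj rC c (a.1.val : ℤ) hψ (s+1)]
    -- pair agrees
    have hpair : (moveOf (graphD (8 * t)) (rD.pos a s) (alg.out (rD.mem a s))).2
        = (moveOf graphC (rC.pos c s) (alg.out (rC.mem c s))).2 := by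
      rw [hpos_s, hout, pairC_proj rC c (a.1.val : ℤ) hψ s]
      exact congrArg Prod.snd hcomm
    -- Step F: the sets of met memories agree
    have hset : { m : M | ∃ b, b ≠ a ∧ rD.pos b (s+1) = rD.pos a (s+1) ∧ rD.mem b s = m }
        = { m : M | ∃ b', b' ≠ c ∧ rC.pos b' (s+1) = rC.pos c (s+1) ∧ rC.mem b' s = m } := by
      ext m
      constructor
      · rintro ⟨b, hbne, hbp, rfl⟩
        set y := zrun (outsC rC (psi b)) (b.1.val : ℤ) with hy
        have hfb1 : Far (8 * t) (baseD (8 * t) (rD.pos b (s+1))) (s+1) := by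
          rw [hbp, hposs1, baseD_projD hn hn8 (zrun_ok f _ (s+1))]
          exact (far_emod (by omega)).mpr hfx1
        have hfb : Far (8 * t) (baseD (8 * t) (rD.pos b s)) s := by
          rw [rD.step_pos] at hfb1
          exact Far.stepN hfb1 (baseD_moveOf hn hn8 (rD.pos b s) (alg.out (rD.mem b s)))
        obtain ⟨hbpos, hbmem⟩ := ih b (Or.inr hfb)
        have hfby : Far (8 * t) (y s).1 s := by
          rw [hbpos, baseD_projD hn hn8 (zrun_ok _ _ s)] at hfb
          exact (far_emod (by omega)).mp hfb
        have hbout : alg.out (rD.mem b s) = outsC rC (psi b) s := by rw [hbmem]; rfl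
        have hbcomm := moveOf_projD hn hn8 (zrun_ok (outsC rC (psi b)) _ s)
          hfby.not_dvd (outsC rC (psi b) s)
        have hbpos1 : rD.pos b (s+1) = projD (8 * t) (y (s+1)) := by
          rw [rD.step_pos, hbpos, hbout]
          exact congrArg Prod.fst hbcomm
        have hproj : projD (8 * t) (y (s+1)) = projD (8 * t) (x (s+1)) := by
          rw [← hbpos1, hbp, hposs1]
        have hinj := projD_inj hn hn8 (zrun_ok _ _ (s+1)) (zrun_ok f _ (s+1)) hproj
        have hcbne : psi b ≠ c := by
          intro hcb
          have hd4 : ((b.1.val : ℤ) - (a.1.val : ℤ)) % 4 = 0 := by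
            have h2 := psi_val_mod b
            rw [hcb] at h2
            rcases hc01 c with h | h <;>
              rw [h] at hψ h2 <;> simp at hψ h2 <;> omega
          have hadd := zrun_add f ((a.1.val : ℤ)) ((b.1.val : ℤ) - (a.1.val : ℤ))
            (by omega) (s+1)
          have harg : ((a.1.val : ℤ)) + ((b.1.val : ℤ) - (a.1.val : ℤ)) = (b.1.val : ℤ) := by
            ring
          rw [harg] at hadd
          have hy1 : (y (s+1)).1 = (x (s+1)).1 + ((b.1.val : ℤ) - (a.1.val : ℤ)) := by
            rw [hy, hcb, ← hf, hadd]
          have hmodn := hinj.2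
          rw [hy1] at hmodn
          have hdvd : ((8 * t : ℕ) : ℤ) ∣ ((b.1.val : ℤ) - (a.1.val : ℤ)) := by
            have := Int.emod_emod_of_dvd
            have h3 : ((x (s+1)).1 + ((b.1.val:ℤ) - a.1.val) - (x (s+1)).1) % ((8*t:ℕ):ℤ) = 0 := by
              rw [Int.sub_emod, hmodn, sub_self, Int.zero_emod]
            have h4 : ((x (s+1)).1 + ((b.1.val:ℤ) - a.1.val) - (x (s+1)).1)
                = (b.1.val:ℤ) - a.1.val := by ring
            rw [h4] at h3
            exact Int.dvd_of_emod_eq_zero h3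
          obtain ⟨k, hk⟩ := hdvd
          have hba : b.1.val ≠ a.1.val := fun hv => hbne (Subtype.ext (Fin.ext hv))
          have hblt := b.1.isLt
          have halt := a.1.isLt
          have hk0 : k = 0 := by
            rcases lt_trichotomy k 0 with h | h | h
            · have h8 : ((8*t : ℕ) : ℤ) * k ≤ ((8*t : ℕ) : ℤ) * (-1) :=
                mul_le_mul_of_nonneg_left (by omega) (by positivity)
              omega
            · exact h
            · have h8 : ((8*t : ℕ) : ℤ) * 1 ≤ ((8*t : ℕ) : ℤ) * k :=
                mul_le_mul_of_nonneg_left (by omega) (by positivity)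
              omega
          rw [hk0, mul_zero] at hk
          omega
        refine ⟨psi b, hcbne, ?_, by rw [hbmem]⟩
        rw [posC_proj rC (psi b) (b.1.val : ℤ) (psi_val_mod b) (s+1),
          posC_proj rC c (a.1.val : ℤ) hψ (s+1)]
        refine projC_congr hinj.1 ?_
        have h4 := hinj.2
        have e1 := emod_four (y (s+1)).1 hn
        have e2 := emod_four (x (s+1)).1 hn
        rw [← e1, ← e2, h4]
      · rintro ⟨b', hb'ne, hb'p, rfl⟩
        set w := zrun (outsC rC b') (zeta b') with hw
        have hwp : rC.pos b' (s+1) = projC (w (s+1)) :=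
          posC_proj rC b' (zeta b') (by rw [zeta_mod]) (s+1)
        have hxp : rC.pos c (s+1) = projC (x (s+1)) :=
          posC_proj rC c (a.1.val : ℤ) hψ (s+1)
        have hprojC : projC (w (s+1)) = projC (x (s+1)) := by
          rw [← hwp, ← hxp, hb'p]
        have hinj := projC_inj (zrun_ok _ _ (s+1)) (zrun_ok _ _ (s+1)) hprojC
        set Bz : ℤ := (x (s+1)).1 - (w (s+1)).1 with hBz
        have hBz4 : Bz % 4 = 0 := by
          have hxw : (w (s+1)).1 % 4 = (x (s+1)).1 % 4 := hinj.2
          omega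
        set β : ℕ := ((zeta b' + Bz) % ((8*t : ℕ) : ℤ)).toNat with hβ
        have hβlt : β < 8 * t := emod_toNat_lt _ (by omega)
        have hβZ : (β : ℤ) = (zeta b' + Bz) % ((8*t : ℕ) : ℤ) := by
          rw [hβ, Int.toNat_of_nonneg (emod_bounds _ (by omega : 0 < 8*t)).1]
        have hβ4 : (β : ℤ) % 4 = zeta b' % 4 := by
          rw [hβZ, emod_four _ hn]
          omega
        have hβmod : β % 4 = 0 ∨ β % 4 = 3 := by
          rcases hc01 b' with h | h <;>
            rw [h] at hβ4 <;> simp [zeta] at hβ4 <;> omega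
        set b : AgentsD (8 * t) := ⟨⟨β, hβlt⟩, hβmod⟩ with hb
        have hpsib : psi b = b' := by
          rcases hc01 b' with h | h <;>
            rw [h] at hβ4 ⊢ <;> simp [zeta] at hβ4 <;> simp [psi, hb] <;> omega
        have hd2 : ((β : ℤ) - zeta b') % 2 = 0 := by omega
        have hadd := zrun_add (outsC rC b') (zeta b') ((β : ℤ) - zeta b') hd2
        have harg : zeta b' + ((β : ℤ) - zeta b') = (β : ℤ) := by ring
        rw [harg] at hadd
        -- divisibility: β - zeta b' ≡ Bz  (mod 8t)
        have hdvd : ((8*t : ℕ) : ℤ) ∣ (((β : ℤ) - zeta b') - Bz) := by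
          have : (β : ℤ) - zeta b' - Bz = (zeta b' + Bz) % ((8*t:ℕ):ℤ) - (zeta b' + Bz) := by
            rw [hβZ]; ring
          rw [this]
          have h5 : ((8*t:ℕ):ℤ) ∣ ((zeta b' + Bz) - (zeta b' + Bz) % ((8*t:ℕ):ℤ)) :=
            Int.dvd_self_sub_of_emod_eq rfl
          rw [show (zeta b' + Bz) % ((8*t:ℕ):ℤ) - (zeta b' + Bz)
            = -((zeta b' + Bz) - (zeta b' + Bz) % ((8*t:ℕ):ℤ)) by ring]
          exact dvd_neg.mpr h5
        -- Far condition for b at time s (intended disjunct)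
        have hfarb : Far (8 * t) (zrun (outsC rC b') (β : ℤ) s).1 s := by
          rw [hadd s]
          refine far_congr (z := (w s).1 + Bz) ?_ ?_
          · have : (w s).1 + Bz - ((w s).1 + ((β:ℤ) - zeta b')) = -(((β : ℤ) - zeta b') - Bz) := by
              ring
            rw [this]
            exact dvd_neg.mpr hdvd
          · refine Far.step hfx1 ?_
            have : (w s).1 + Bz - (x (s+1)).1 = (w s).1 - (w (s+1)).1 := by
              rw [hBz]; ring
            rw [this, abs_sub_comm]
            exact zmove_drift (w s) (outsC rC b' s)
        have hfarb' : Far (8 * t) (zrun (outsC rC (psi b)) ((b.1.val : ℤ)) s).1 s := by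
          rw [hpsib]
          exact hfarb
        obtain ⟨hbpos, hbmem⟩ := ih b (Or.inl hfarb')
        have hbout : alg.out (rD.mem b s) = outsC rC (psi b) s := by rw [hbmem]; rfl
        have hbcomm := moveOf_projD hn hn8 (zrun_ok (outsC rC (psi b)) _ s)
          (by rw [show psi b = b' from hpsib]; exact hfarb.not_dvd) (outsC rC (psi b) s)
        have hbpos1 : rD.pos b (s+1)
            = projD (8 * t) (zrun (outsC rC (psi b)) ((b.1.val : ℤ)) (s+1)) := by
          rw [rD.step_pos, hbpos, hbout]
          exact congrArg Prod.fst hbcomm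
        have hbpos1' : rD.pos b (s+1) = projD (8 * t) (zrun (outsC rC b') ((β : ℤ)) (s+1)) := by
          rw [hbpos1, hpsib]
        have hposeq : rD.pos b (s+1) = rD.pos a (s+1) := by
          rw [hbpos1', hposs1, hadd (s+1)]
          refine projD_congr hinj.1 ?_
          obtain ⟨k, hk⟩ := hdvd
          have h7 : (w (s+1)).1 + ((β : ℤ) - zeta b')
              = (x (s+1)).1 + ((8*t : ℕ) : ℤ) * k := by
            rw [hBz] at hk
            omega
          show ((w (s+1)).1 + ((β : ℤ) - zeta b')) % ((8*t:ℕ):ℤ) = (x (s+1)).1 % ((8*t:ℕ):ℤ)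
          rw [h7, Int.add_mul_emod_self_left]
        have hbnea : b ≠ a := fun h => hb'ne (by rw [← hpsib, h, ← hc])
        exact ⟨b, hbnea, hposeq, by rw [hbmem, hpsib]⟩
    -- Step G: conclude
    rw [rD.step_mem, hdeg, hpair, hset, hmem_s, ← rC.step_mem]

end NoUniv
/-- there is no universal deterministic algorithm for gathering with
detection working for all gatherable configurations in all graphs when no upper bound on
the graph size is known.  Concretely: for any deterministic algorithm (given by `alg`
together with a declaration predicate `declare` on memories), if with simultaneous
wake-up it gathers configuration C with detection in `t` rounds (all agents at one node
in round `t`, all declaring that gathering is over), then in configuration `D (8t)` the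
two agents starting at `v_{4t-1}` and `v_{4t}` falsely declare gathering over in round
`t`, while not all agents are at one node in round `t`. -/
theorem no_universal_gathering_with_detection {M : Type}
    (alg : Algo M) (declare : M → Bool) (t : ℕ) (ht : 0 < t) [NeZero (8 * t)]
    (rC : Run graphC startC alg)
    (hC : ∃ v : Fin 4 ⊕ Fin 2, ∀ a : Fin 2,
      rC.pos a t = v ∧ declare (rC.mem a t) = true)
    (rD : Run (graphD (8 * t)) (startD (8 * t)) alg) :
    declare (rD.mem ⟨⟨4 * t - 1, by omega⟩, Or.inr (show (4 * t - 1) % 4 = 3 by omega)⟩ t)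
        = true ∧
      declare (rD.mem ⟨⟨4 * t, by omega⟩, Or.inl (show (4 * t) % 4 = 0 by omega)⟩ t)
        = true ∧
      ¬ ∃ v : Fin (8 * t) ⊕ Fin (8 * t / 2 + 1), ∀ a : AgentsD (8 * t), rD.pos a t = v := by
  obtain ⟨v, hv⟩ := hC
  have hn : (8 * t) % 8 = 0 := by omega
  have hn8 : 8 ≤ 8 * t := by omega
  have key : ∀ a : AgentsD (8 * t), 4 * t - 1 ≤ a.1.val → a.1.val ≤ 4 * t →
      NoUniv.Far (8 * t)
        (NoUniv.zrun (NoUniv.outsC rC (NoUniv.psi a)) (a.1.val : ℤ) t).1 t := by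
    intro a h1 h2 m
    have hd := abs_le.mp (NoUniv.zrun_drift (NoUniv.outsC rC (NoUniv.psi a)) (a.1.val : ℤ) t)
    rw [lt_abs]
    rcases le_or_gt m 0 with hm | hm
    · left
      have h3 : m * ((8 * t : ℕ) : ℤ) ≤ 0 :=
        mul_nonpos_of_nonpos_of_nonneg hm (by positivity)
      omega
    · right
      have h3 : ((8 * t : ℕ) : ℤ) * 1 ≤ ((8 * t : ℕ) : ℤ) * m :=
        mul_le_mul_of_nonneg_left (by omega) (by positivity)
      rw [mul_one] at h3
      have h4 : ((8 * t : ℕ) : ℤ) ≤ m * ((8 * t : ℕ) : ℤ) := by linarith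
      omega
  refine ⟨?_, ?_, ?_⟩
  · have hA : (⟨⟨4 * t - 1, by omega⟩,
        Or.inr (show (4 * t - 1) % 4 = 3 by omega)⟩ : AgentsD (8 * t)).1.val
        = 4 * t - 1 := rfl
    have hpsi : NoUniv.psi (⟨⟨4 * t - 1, by omega⟩,
        Or.inr (show (4 * t - 1) % 4 = 3 by omega)⟩ : AgentsD (8 * t)) = 0 := by
      simp only [NoUniv.psi]
      rw [if_pos (show (4 * t - 1) % 4 = 3 by omega)]
    have hm := (NoUniv.main t ht rC rD t
      (⟨⟨4 * t - 1, by omega⟩, Or.inr (show (4 * t - 1) % 4 = 3 by omega)⟩ : AgentsD (8 * t))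
      (Or.inl (key _ (by rw [hA]) (by rw [hA]; omega)))).2
    rw [hm, hpsi]
    exact (hv 0).2
  · have hA : (⟨⟨4 * t, by omega⟩,
        Or.inl (show (4 * t) % 4 = 0 by omega)⟩ : AgentsD (8 * t)).1.val = 4 * t := rfl
    have hpsi : NoUniv.psi (⟨⟨4 * t, by omega⟩,
        Or.inl (show (4 * t) % 4 = 0 by omega)⟩ : AgentsD (8 * t)) = 1 := by
      simp only [NoUniv.psi]
      rw [if_neg (show ¬ (4 * t) % 4 = 3 by omega)]
    have hm := (NoUniv.main t ht rC rD t
      (⟨⟨4 * t, by omega⟩, Or.inl (show (4 * t) % 4 = 0 by omega)⟩ : AgentsD (8 * t))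
      (Or.inl (key _ (by rw [hA]; omega) (by rw [hA])))).2
    rw [hm, hpsi]
    exact (hv 1).2
  · rintro ⟨u, hu⟩
    have h0 := NoUniv.posD_near hn hn8 rD ⟨⟨0, by omega⟩, Or.inl (by simp)⟩ t
    have h1 := NoUniv.posD_near hn hn8 rD ⟨⟨4 * t, by omega⟩, Or.inl (by simp [Nat.mul_mod_right])⟩ t
    rw [hu ⟨⟨0, by omega⟩, Or.inl (by simp)⟩] at h0
    rw [hu ⟨⟨4 * t, by omega⟩, Or.inl (by simp [Nat.mul_mod_right])⟩] at h1
    have h2 := h0.symm.trans h1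
    obtain ⟨m, hm⟩ := h2
    have habs : (((0 : Fin (8 * t)) : ℕ) : ℤ) = 0 := by norm_num
    have he : (((⟨0, by omega⟩ : Fin (8 * t)) : ℕ) : ℤ)
        - (((⟨4 * t, by omega⟩ : Fin (8 * t)) : ℕ) : ℤ) - m * ((8 * t : ℕ) : ℤ)
        = -(4 * (t : ℤ)) * (1 + 2 * m) := by
      push_cast
      ring
    rw [he] at hm
    rw [abs_mul, abs_neg, abs_of_nonneg (by positivity : (0:ℤ) ≤ 4 * (t:ℤ))] at hm
    have hone : 1 ≤ |1 + 2 * m| := Int.one_le_abs (by omega)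
    have h5 : 4 * (t : ℤ) * 1 ≤ 4 * (t : ℤ) * |1 + 2 * m| :=
      mul_le_mul_of_nonneg_left hone (by positivity)
    rw [mul_one] at h5
    have ht' : (1 : ℤ) ≤ t := by exact_mod_cast ht
    push_cast at hm
    linarith
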